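/- Let (X, R_X, μ) and (Y, R_Y, ν) be K-valued measure spaces, and let R be the ring of subsets of X × Y generated by the rectangles {A × B : A ∈ R_X, B ∈ R_Y}. Then there is a unique finitely additive λ : R → K with λ(A × B) = μ(A) ν(B) for all A ∈ R_X, B ∈ R_Y; λ is a K-valued measure on (X × Y, R); and for all A ∈ R_X and B ∈ R_Y one has ‖A × B‖_λ = ‖A‖_μ · ‖B‖_ν. -/

import Mathlib

open Set ENNReal

namespace NonArch

variable {X Y : Type*} {K : Type*}

/-- A covering ring of subsets of `X`: a ring of subsets whose elements cover `X`. -/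
structure IsCoveringRing (R : Set (Set X)) : Prop where
  union_mem : ∀ ⦃A B : Set X⦄, A ∈ R → B ∈ R → A ∪ B ∈ R
  inter_mem : ∀ ⦃A B : Set X⦄, A ∈ R → B ∈ R → A ∩ B ∈ R
  diff_mem : ∀ ⦃A B : Set X⦄, A ∈ R → B ∈ R → A \ B ∈ R
  covers : ∀ x : X, ∃ A ∈ R, x ∈ A

/-- `S` is a shrinking subfamily of `R`. -/
def IsShrinking (R S : Set (Set X)) : Prop :=
  S ⊆ R ∧ ∀ ⦃A⦄, A ∈ S → ∀ ⦃B⦄, B ∈ S → ∃ C ∈ S, C ⊆ A ∩ B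

/-- `lim_{A ∈ S} f A = 0` for a real-valued set function. -/
def TendstoZeroOn (S : Set (Set X)) (f : Set X → ℝ) : Prop :=
  ∀ ε : ℝ, 0 < ε → ∃ B ∈ S, ∀ A ∈ S, A ⊆ B → |f A| ≤ ε

section Measure

variable [NormedField K]

/-- The `μ`-norm `‖A‖_μ := sup{|μ B| : B ∈ R, B ⊆ A}`, as an extended nonnegative real. -/
noncomputable def mnorm (R : Set (Set X)) (μ : Set X → K) (A : Set X) : ℝ≥0∞ :=
  ⨆ (B : Set X) (_ : B ∈ R ∧ B ⊆ A), (‖μ B‖₊ : ℝ≥0∞)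

/-- `N_μ x := inf {‖U‖_μ : x ∈ U ∈ R}`. -/
noncomputable def Nmu (R : Set (Set X)) (μ : Set X → K) (x : X) : ℝ≥0∞ :=
  ⨅ (U : Set X) (_ : U ∈ R ∧ x ∈ U), mnorm R μ U

/-- A `K`-valued measure on `(X, R)`: finitely additive, bounded and continuous with
respect to shrinking families with empty intersection. -/
structure IsMeasure (R : Set (Set X)) (μ : Set X → K) : Prop where
  additive : ∀ ⦃A⦄, A ∈ R → ∀ ⦃B⦄, B ∈ R → Disjoint A B → μ (A ∪ B) = μ A + μ B
  bounded : ∀ ⦃A⦄, A ∈ R → mnorm R μ A < ⊤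
  shrink_cont : ∀ S : Set (Set X), IsShrinking R S → ⋂₀ S = ∅ →
    TendstoZeroOn S fun A => ‖μ A‖

/-- A probability `K`-valued measure on `(X, R)`. -/
structure IsProbability (R : Set (Set X)) (μ : Set X → K) : Prop where
  toIsMeasure : IsMeasure R μ
  univ_mem : Set.univ ∈ R
  measure_univ : μ Set.univ = 1
  mnorm_univ : mnorm R μ Set.univ = 1

/-- An `R`-step function: a finite `K`-linear combination of characteristic functions
of members of `R`. -/
def IsStep (R : Set (Set X)) (f : X → K) : Prop :=
  ∃ (n : ℕ) (c : Fin n → K) (A : Fin n → Set X),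
    (∀ i, A i ∈ R) ∧ ∀ x, f x = ∑ i, c i * (A i).indicator 1 x

/-- The norm `‖f‖_{N_μ} := sup_x ‖f x‖ N_μ(x)`. -/
noncomputable def fnorm (R : Set (Set X)) (μ : Set X → K) (f : X → K) : ℝ≥0∞ :=
  ⨆ x : X, (‖f x‖₊ : ℝ≥0∞) * Nmu R μ x

/-- The completion `R_μ` of `R` relative to `μ`: those subsets whose characteristic
functions are `‖·‖_{N_μ}`-limits of `R`-step functions. -/
def completion (R : Set (Set X)) (μ : Set X → K) : Set (Set X) :=
  {A | ∀ ε : ℝ≥0∞, 0 < ε → ∃ f : X → K, IsStep R f ∧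
    fnorm R μ (fun x => A.indicator 1 x - f x) ≤ ε}

end Measure

end NonArch

namespace NonArch

/-- The ring of subsets generated by a family `B` of subsets. -/
inductive RingGen {Z : Type*} (B : Set (Set Z)) : Set Z → Prop
  | basic {A : Set Z} : A ∈ B → RingGen B A
  | union {A C : Set Z} : RingGen B A → RingGen B C → RingGen B (A ∪ C)
  | inter {A C : Set Z} : RingGen B A → RingGen B C → RingGen B (A ∩ C)
  | diff {A C : Set Z} : RingGen B A → RingGen B C → RingGen B (A \ C)

/-- The family of measurable rectangles `A × B`, `A ∈ R_X`, `B ∈ R_Y`. -/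
def rectangles {X Y : Type*} (RX : Set (Set X)) (RY : Set (Set Y)) :
    Set (Set (X × Y)) :=
  {S | ∃ A ∈ RX, ∃ B ∈ RY, S = A ×ˢ B}

/-! ### Auxiliary material for the product-measure theorem -/

section Aux

variable {X Y : Type*} {K : Type*}

theorem aux_univ_filter_mem {ι : Type*} [Fintype ι] [DecidableEq ι] (s : Finset ι) :
    Finset.univ.filter (fun i => i ∈ s) = s := by
  ext i; simp

section UltraSum

variable [NontriviallyNormedField K] [IsUltrametricDist K]

theorem aux_unorm_sum_le {ι : Type*} (s : Finset ι) (f : ι → K) {c : ℝ} (hc : 0 ≤ c)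
    (h : ∀ i ∈ s, ‖f i‖ ≤ c) : ‖∑ i ∈ s, f i‖ ≤ c :=
  IsUltrametricDist.norm_sum_le_of_forall_le_of_nonneg hc h

theorem aux_unnnorm_sum_le {ι : Type*} (s : Finset ι) (f : ι → K) {Z : ℝ≥0∞}
    (h : ∀ i ∈ s, (‖f i‖₊ : ℝ≥0∞) ≤ Z) : (‖∑ i ∈ s, f i‖₊ : ℝ≥0∞) ≤ Z := by
  rcases eq_or_ne Z ⊤ with rfl | hZ
  · exact le_top
  · lift Z to NNReal using hZ
    exact_mod_cast IsUltrametricDist.nnnorm_sum_le_of_forall_le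
      (fun i hi => by exact_mod_cast h i hi)

end UltraSum

section BasicRing

variable {R : Set (Set X)}

theorem IsMeasure.nonempty' [NormedField K] {R : Set (Set X)} {μ : Set X → K}
    (hμ : IsMeasure R μ) : Nonempty X := by
  by_contra h
  rw [not_nonempty_iff] at h
  obtain ⟨B, hB, -⟩ := hμ.shrink_cont ∅
    ⟨empty_subset _, fun A hA => absurd hA (notMem_empty _)⟩
    (by rw [sInter_empty]; exact univ_eq_empty_iff.mpr h) 1 one_pos
  exact hB

theorem IsCoveringRing.empty_mem [Nonempty X] (hR : IsCoveringRing R) : ∅ ∈ R := by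
  obtain ⟨A, hA, -⟩ := hR.covers (Classical.arbitrary X)
  have := hR.diff_mem hA hA
  rwa [Set.diff_self] at this

theorem aux_biUnion_mem {ι : Type*} (hR : IsCoveringRing R) (h0 : ∅ ∈ R) (C : ι → Set X)
    (t : Finset ι) (hC : ∀ i ∈ t, C i ∈ R) : (⋃ i ∈ t, C i) ∈ R := by
  classical
  revert hC
  induction t using Finset.induction_on with
  | empty => intro _; simpa using h0
  | @insert a s ha ih =>
      intro hC
      rw [Finset.set_biUnion_insert]
      exact hR.union_mem (hC _ (Finset.mem_insert_self _ _))
        (ih fun i hi => hC i (Finset.mem_insert_of_mem hi))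

theorem aux_iUnion_mem {ι : Type*} [Fintype ι] (hR : IsCoveringRing R) (h0 : ∅ ∈ R)
    (C : ι → Set X) (hC : ∀ i, C i ∈ R) : (⋃ i, C i) ∈ R := by
  have : (⋃ i, C i) = ⋃ i ∈ (Finset.univ : Finset ι), C i := by simp
  rw [this]
  exact aux_biUnion_mem hR h0 C _ fun i _ => hC i

theorem aux_biInter_mem {ι : Type*} (hR : IsCoveringRing R) (C : ι → Set X)
    (t : Finset ι) (ht : t.Nonempty) (hC : ∀ i ∈ t, C i ∈ R) : (⋂ i ∈ t, C i) ∈ R := by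
  classical
  revert hC
  induction ht using Finset.Nonempty.cons_induction with
  | singleton a => intro hC; simpa using hC a (Finset.mem_singleton_self a)
  | cons a s ha hs ih =>
      intro hC
      rw [Finset.cons_eq_insert, Finset.set_biInter_insert]
      exact hR.inter_mem (hC _ (by simp))
        (ih fun i hi => hC i (by simp [hi]))

theorem aux_measure_empty [NormedField K] {μ : Set X → K}
    (hadd : ∀ ⦃A⦄, A ∈ R → ∀ ⦃B⦄, B ∈ R → Disjoint A B → μ (A ∪ B) = μ A + μ B)
    (h0 : ∅ ∈ R) : μ ∅ = 0 := by
  have h := hadd h0 h0 (by simp : Disjoint (∅ : Set X) ∅)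
  rw [Set.union_self] at h
  exact left_eq_add.mp h

theorem aux_additive_biUnion [NormedField K] {μ : Set X → K} (hR : IsCoveringRing R)
    (h0 : ∅ ∈ R)
    (hadd : ∀ ⦃A⦄, A ∈ R → ∀ ⦃B⦄, B ∈ R → Disjoint A B → μ (A ∪ B) = μ A + μ B)
    {ι : Type*} (C : ι → Set X) (t : Finset ι) (hC : ∀ i ∈ t, C i ∈ R)
    (hd : ∀ i ∈ t, ∀ j ∈ t, i ≠ j → Disjoint (C i) (C j)) :
    μ (⋃ i ∈ t, C i) = ∑ i ∈ t, μ (C i) := by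
  classical
  revert hC hd
  induction t using Finset.induction_on with
  | empty => intro _ _; simpa using aux_measure_empty hadd h0
  | @insert a s ha ih =>
      intro hC hd
      rw [Finset.set_biUnion_insert, Finset.sum_insert ha,
        hadd (hC _ (Finset.mem_insert_self _ _))
          (aux_biUnion_mem hR h0 C s fun i hi => hC i (Finset.mem_insert_of_mem hi))
          (by
            simp only [Set.disjoint_iUnion_right]
            exact fun i hi => hd a (Finset.mem_insert_self _ _) i
              (Finset.mem_insert_of_mem hi) (fun h => ha (h ▸ hi))),
        ih (fun i hi => hC i (Finset.mem_insert_of_mem hi))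
          (fun i hi j hj hij => hd i (Finset.mem_insert_of_mem hi) j
            (Finset.mem_insert_of_mem hj) hij)]

end BasicRing

section Atoms

variable {R : Set (Set X)} {ι : Type*}

/-- The atom of the finite family `G` determined by the index set `s`. -/
def ratom (G : ι → Set X) (s : Finset ι) : Set X := {x | ∀ i, x ∈ G i ↔ i ∈ s}

theorem ratom_disjoint (G : ι → Set X) {s t : Finset ι} (h : s ≠ t) :
    Disjoint (ratom G s) (ratom G t) := by
  rw [Set.disjoint_left]
  intro x hx hx'
  exact h (Finset.ext fun i => ((hx i).symm.trans (hx' i)))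

theorem mem_ratom_self [Fintype ι] (G : ι → Set X) (x : X)
    [DecidablePred fun i => x ∈ G i] :
    x ∈ ratom G (Finset.univ.filter fun i => x ∈ G i) := by
  simp [ratom]

theorem ratom_mem [Fintype ι] (hR : IsCoveringRing R) (h0 : ∅ ∈ R) (G : ι → Set X)
    (hG : ∀ i, G i ∈ R) {s : Finset ι} (hs : s.Nonempty) : ratom G s ∈ R := by
  classical
  have heq : ratom G s = (⋂ i ∈ s, G i) \ (⋃ i ∈ sᶜ, G i) := by
    ext x
    simp only [ratom, Set.mem_setOf_eq, Set.mem_diff, Set.mem_iUnion, Finset.mem_compl,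
      Set.mem_iInter, not_exists]
    constructor
    · intro h
      exact ⟨fun i hi => (h i).mpr hi, fun i hi hxi => hi ((h i).mp hxi)⟩
    · intro h i
      constructor
      · intro hxi
        by_contra his
        exact h.2 i his hxi
      · intro his
        exact h.1 i his
  rw [heq]
  exact hR.diff_mem (aux_biInter_mem hR G s hs fun i _ => hG i)
    (aux_biUnion_mem hR h0 G sᶜ fun i _ => hG i)

theorem ratom_cover [Fintype ι] [DecidableEq ι] (G : ι → Set X) (j : ι) :
    G j = ⋃ s ∈ Finset.univ.filter (fun s : Finset ι => j ∈ s), ratom G s := by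
  classical
  ext x
  simp only [Set.mem_iUnion, Finset.mem_filter, Finset.mem_univ, true_and]
  constructor
  · intro hx
    exact ⟨Finset.univ.filter fun i => x ∈ G i, by simpa using hx, mem_ratom_self G x⟩
  · rintro ⟨s, hjs, hxs⟩
    exact (hxs j).mpr hjs

theorem measure_eq_sum_ratoms [NormedField K] [Fintype ι] [DecidableEq ι] {μ : Set X → K}
    (hR : IsCoveringRing R) (h0 : ∅ ∈ R)
    (hadd : ∀ ⦃A⦄, A ∈ R → ∀ ⦃B⦄, B ∈ R → Disjoint A B → μ (A ∪ B) = μ A + μ B)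
    (G : ι → Set X) (hG : ∀ i, G i ∈ R) (j : ι) :
    μ (G j) = ∑ s ∈ Finset.univ.filter (fun s : Finset ι => j ∈ s), μ (ratom G s) := by
  conv_lhs => rw [ratom_cover G j]
  exact aux_additive_biUnion hR h0 hadd _ _
    (fun s hs => ratom_mem hR h0 G hG ⟨j, (Finset.mem_filter.mp hs).2⟩)
    (fun s _ t _ hst => ratom_disjoint G hst)

end Atoms

section LemmaA

variable [NontriviallyNormedField K]

/-- Key lemma: for a measure, the `mnorm` also tends to zero along shrinking
families with empty intersection. -/
theorem aux_mnorm_cont {R : Set (Set X)} {μ : Set X → K}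
    (hR : IsCoveringRing R) (hμ : IsMeasure R μ) {S : Set (Set X)}
    (hS : IsShrinking R S) (hI : ⋂₀ S = ∅) {ε : ℝ} (hε : 0 < ε) :
    ∃ B ∈ S, ∀ A ∈ S, A ⊆ B → ∀ T ∈ R, T ⊆ A → ‖μ T‖ ≤ ε := by
  by_contra hcon
  push_neg at hcon
  have hkey : ∀ B ∈ S, ∃ E ∈ S, ∃ V ∈ R, E ∪ V ⊆ B ∧ Disjoint E V ∧ ε / 2 < ‖μ V‖ := by
    intro B hB
    obtain ⟨A, hA, hAB, T, hT, hTA, hTbig⟩ := hcon B hB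
    have hshr : IsShrinking R ((fun C => C ∩ T) '' S) := by
      constructor
      · rintro _ ⟨C, hC, rfl⟩
        exact hR.inter_mem (hS.1 hC) hT
      · rintro _ ⟨C, hC, rfl⟩ _ ⟨C', hC', rfl⟩
        obtain ⟨C'', hC'', hsub⟩ := hS.2 hC hC'
        refine ⟨C'' ∩ T, ⟨C'', hC'', rfl⟩, fun x hx => ?_⟩
        exact ⟨⟨(hsub hx.1).1, hx.2⟩, (hsub hx.1).2, hx.2⟩
    have hint : ⋂₀ ((fun C => C ∩ T) '' S) = ∅ := by
      rw [eq_empty_iff_forall_notMem]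
      intro x hx
      have hxS : x ∈ ⋂₀ S := fun C hC => (hx _ ⟨C, hC, rfl⟩).1
      rw [hI] at hxS
      exact hxS
    obtain ⟨M0, hM0mem, hM0⟩ := hμ.shrink_cont _ hshr hint (ε / 2) (by linarith)
    obtain ⟨C0, hC0, rfl⟩ := hM0mem
    obtain ⟨E, hE, hEsub⟩ := hS.2 hC0 hA
    refine ⟨E, hE, T \ E, hR.diff_mem hT (hS.1 hE), ?_, disjoint_sdiff_right, ?_⟩
    · intro x hx
      rcases hx with hx | hx
      · exact hAB (hEsub hx).2
      · exact hAB (hTA hx.1)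
    · have hdisj2 : Disjoint (T \ E) (T ∩ E) :=
        Set.disjoint_of_subset_right Set.inter_subset_right disjoint_sdiff_left
      have hsplit : μ T = μ (T \ E) + μ (T ∩ E) := by
        have hu : (T \ E) ∪ (T ∩ E) = T := Set.diff_union_inter T E
        conv_lhs => rw [← hu]
        exact hμ.additive (hR.diff_mem hT (hS.1 hE)) (hR.inter_mem hT (hS.1 hE)) hdisj2
      have hsmall : ‖μ (T ∩ E)‖ ≤ ε / 2 := by
        have hmemF : E ∩ T ∈ (fun C => C ∩ T) '' S := ⟨E, hE, rfl⟩
        have hsub2 : E ∩ T ⊆ C0 ∩ T := fun x hx => ⟨(hEsub hx.1).1, hx.2⟩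
        have := hM0 _ hmemF hsub2
        rw [abs_norm] at this
        rwa [Set.inter_comm]
      have heq : μ (T \ E) = μ T - μ (T ∩ E) := by rw [hsplit]; ring
      have hlb : ‖μ T‖ - ‖μ (T ∩ E)‖ ≤ ‖μ (T \ E)‖ := by
        rw [heq]
        exact norm_sub_norm_le _ _
      linarith
  choose E hES V hVR hsubEV hdisjEV hbig using hkey
  set F : Set (Set X) :=
    {M | ∃ B, ∃ hB : B ∈ S, M = E B hB ∪ V B hB ∨ M = E B hB} with hF
  have hEsubB : ∀ B (hB : B ∈ S), E B hB ⊆ B := fun B hB =>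
    (Set.subset_union_left).trans (hsubEV B hB)
  have hFshr : IsShrinking R F := by
    constructor
    · rintro M ⟨B, hB, hM | hM⟩
      · rw [hM]; exact hR.union_mem (hS.1 (hES B hB)) (hVR B hB)
      · rw [hM]; exact hS.1 (hES B hB)
    · rintro M1 ⟨B1, hB1, hM1⟩ M2 ⟨B2, hB2, hM2⟩
      obtain ⟨C, hC, hCsub⟩ := hS.2 (hES B1 hB1) (hES B2 hB2)
      have hE1M : E B1 hB1 ⊆ M1 := by
        rcases hM1 with rfl | rfl
        · exact Set.subset_union_left
        · exact subset_rfl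
      have hE2M : E B2 hB2 ⊆ M2 := by
        rcases hM2 with rfl | rfl
        · exact Set.subset_union_left
        · exact subset_rfl
      refine ⟨E C hC, ⟨C, hC, Or.inr rfl⟩, fun x hx => ?_⟩
      have hxC := hEsubB C hC hx
      exact ⟨hE1M (hCsub hxC).1, hE2M (hCsub hxC).2⟩
  have hFI : ⋂₀ F = ∅ := by
    rw [eq_empty_iff_forall_notMem]
    intro x hx
    have hxS : x ∈ ⋂₀ S := fun B hB => hsubEV B hB (hx _ ⟨B, hB, Or.inl rfl⟩)
    rw [hI] at hxS
    exact hxS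
  obtain ⟨Mstar, hMstarF, hthr⟩ := hμ.shrink_cont F hFshr hFI (ε / 4) (by linarith)
  obtain ⟨Bs, hBs, hMeq⟩ := hMstarF
  have hEstar : E Bs hBs ⊆ Mstar := by
    rcases hMeq with rfl | rfl
    · exact Set.subset_union_left
    · exact subset_rfl
  obtain ⟨C, hC, hCsub⟩ := hS.2 (hES Bs hBs) (hES Bs hBs)
  have hCE : C ⊆ Mstar := fun x hx => hEstar (hCsub hx).1
  have h1 := hthr (E C hC ∪ V C hC) ⟨C, hC, Or.inl rfl⟩ ((hsubEV C hC).trans hCE)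
  have h2 := hthr (E C hC) ⟨C, hC, Or.inr rfl⟩ ((hEsubB C hC).trans hCE)
  rw [abs_norm] at h1 h2
  have hadd2 : μ (E C hC ∪ V C hC) = μ (E C hC) + μ (V C hC) :=
    hμ.additive (hS.1 (hES C hC)) (hVR C hC) (hdisjEV C hC)
  have hVeq : μ (V C hC) = μ (E C hC ∪ V C hC) - μ (E C hC) := by rw [hadd2]; ring
  have : ‖μ (V C hC)‖ ≤ ε / 4 + ε / 4 := by
    rw [hVeq]
    exact (norm_sub_le _ _).trans (by linarith)
  have := hbig C hC
  linarith

end LemmaA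

section Reps

variable (RX : Set (Set X)) (RY : Set (Set Y))

/-- `(C, D)` is a finite disjoint rectangle representation of `S`. -/
def RepOf (S : Set (X × Y)) {ι : Type} [Fintype ι] (C : ι → Set X) (D : ι → Set Y) : Prop :=
  (∀ i, C i ∈ RX) ∧ (∀ i, D i ∈ RY) ∧
    (Pairwise fun i j => Disjoint (C i ×ˢ D i) (C j ×ˢ D j)) ∧ S = ⋃ i, C i ×ˢ D i

/-- `S` has a finite disjoint rectangle representation. -/
def HasRep (S : Set (X × Y)) : Prop :=
  ∃ (n : ℕ) (C : Fin n → Set X) (D : Fin n → Set Y), RepOf RX RY S C D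

variable {RX RY}

theorem RepOf.reindex {S : Set (X × Y)} {ι κ : Type} [Fintype ι] [Fintype κ]
    {C : ι → Set X} {D : ι → Set Y} (h : RepOf RX RY S C D) (e : κ ≃ ι) :
    RepOf RX RY S (C ∘ e) (D ∘ e) := by
  refine ⟨fun k => h.1 (e k), fun k => h.2.1 (e k), ?_, ?_⟩
  · intro k k' hkk'
    exact h.2.2.1 (fun hh => hkk' (e.injective hh))
  · rw [h.2.2.2]
    exact (e.surjective.iUnion_comp fun i => C i ×ˢ D i).symm

theorem RepOf.hasRep {S : Set (X × Y)} {ι : Type} [Fintype ι]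
    {C : ι → Set X} {D : ι → Set Y} (h : RepOf RX RY S C D) : HasRep RX RY S :=
  ⟨Fintype.card ι, _, _, h.reindex (Fintype.equivFin ι).symm⟩

theorem hasRep_empty : HasRep RX RY (∅ : Set (X × Y)) := by
  refine ⟨0, Fin.elim0, Fin.elim0, fun i => i.elim0, fun i => i.elim0, ?_, ?_⟩
  · intro i; exact i.elim0
  · simp

theorem hasRep_rect {A : Set X} {B : Set Y} (hA : A ∈ RX) (hB : B ∈ RY) :
    HasRep RX RY (A ×ˢ B) := by
  refine ⟨1, fun _ => A, fun _ => B, fun _ => hA, fun _ => hB, ?_, ?_⟩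
  · exact Subsingleton.pairwise
  · simp [Set.iUnion_const]

theorem RepOf.subset_left {S : Set (X × Y)} {ι : Type} [Fintype ι]
    {C : ι → Set X} {D : ι → Set Y} (h : RepOf RX RY S C D) (i : ι) :
    C i ×ˢ D i ⊆ S := by
  rw [h.2.2.2]
  exact Set.subset_iUnion (fun i => C i ×ˢ D i) i

theorem RepOf.union_disjoint {S T : Set (X × Y)} {ι κ : Type} [Fintype ι] [Fintype κ]
    {C : ι → Set X} {D : ι → Set Y} {C' : κ → Set X} {D' : κ → Set Y}
    (h1 : RepOf RX RY S C D) (h2 : RepOf RX RY T C' D') (hST : Disjoint S T) :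
    RepOf RX RY (S ∪ T) (Sum.elim C C') (Sum.elim D D') := by
  refine ⟨fun k => ?_, fun k => ?_, ?_, ?_⟩
  · cases k with
    | inl i => exact h1.1 i
    | inr j => exact h2.1 j
  · cases k with
    | inl i => exact h1.2.1 i
    | inr j => exact h2.2.1 j
  · intro k k' hkk'
    rcases k with i | j <;> rcases k' with i' | j'
    · exact h1.2.2.1 (fun hh => hkk' (by rw [hh]))
    · exact hST.mono (h1.subset_left i) (h2.subset_left j')
    · exact (hST.mono (h1.subset_left i') (h2.subset_left j)).symm
    · exact h2.2.2.1 (fun hh => hkk' (by rw [hh]))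
  · rw [h1.2.2.2, h2.2.2.2]
    rw [Set.iUnion_sum]
    simp

theorem RepOf.inter {S T : Set (X × Y)} {ι κ : Type} [Fintype ι] [Fintype κ]
    {C : ι → Set X} {D : ι → Set Y} {C' : κ → Set X} {D' : κ → Set Y}
    (hRX : IsCoveringRing RX) (hRY : IsCoveringRing RY)
    (h1 : RepOf RX RY S C D) (h2 : RepOf RX RY T C' D') :
    RepOf RX RY (S ∩ T) (fun p : ι × κ => C p.1 ∩ C' p.2)
      (fun p : ι × κ => D p.1 ∩ D' p.2) := by
  refine ⟨fun p => hRX.inter_mem (h1.1 p.1) (h2.1 p.2),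
    fun p => hRY.inter_mem (h1.2.1 p.1) (h2.2.1 p.2), ?_, ?_⟩
  · intro p q hpq
    have hne : p.1 ≠ q.1 ∨ p.2 ≠ q.2 := by
      by_contra hcon
      push_neg at hcon
      exact hpq (Prod.ext hcon.1 hcon.2)
    show Disjoint ((C p.1 ∩ C' p.2) ×ˢ (D p.1 ∩ D' p.2))
      ((C q.1 ∩ C' q.2) ×ˢ (D q.1 ∩ D' q.2))
    rw [← Set.prod_inter_prod, ← Set.prod_inter_prod]
    rcases hne with h | h
    · exact ((h1.2.2.1 h).mono Set.inter_subset_left Set.inter_subset_left)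
    · exact ((h2.2.2.1 h).mono Set.inter_subset_right Set.inter_subset_right)
  · rw [h1.2.2.2, h2.2.2.2]
    ext z
    simp only [Set.mem_inter_iff, Set.mem_iUnion, Set.prod_inter_prod, Set.mem_prod]
    constructor
    · rintro ⟨⟨i, hi⟩, ⟨j, hj⟩⟩
      exact ⟨(i, j), ⟨hi.1, hj.1⟩, hi.2, hj.2⟩
    · rintro ⟨⟨i, j⟩, ⟨hx1, hx2⟩, hy1, hy2⟩
      exact ⟨⟨i, hx1, hy1⟩, ⟨j, hx2, hy2⟩⟩

theorem RepOf.diff_rect {S : Set (X × Y)} {ι : Type} [Fintype ι]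
    {C : ι → Set X} {D : ι → Set Y}
    (hRX : IsCoveringRing RX) (hRY : IsCoveringRing RY)
    (h : RepOf RX RY S C D) {A : Set X} {B : Set Y} (hA : A ∈ RX) (hB : B ∈ RY) :
    RepOf RX RY (S \ A ×ˢ B) (Sum.elim (fun i => C i \ A) (fun i => C i ∩ A))
      (Sum.elim D (fun i => D i \ B)) := by
  have hpiece : ∀ i, C i ×ˢ D i \ A ×ˢ B
      = ((C i \ A) ×ˢ D i) ∪ ((C i ∩ A) ×ˢ (D i \ B)) := by
    intro i
    ext ⟨x, y⟩
    simp only [Set.mem_diff, Set.mem_prod, Set.mem_union, Set.mem_inter_iff]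
    by_cases hx : x ∈ A <;> by_cases hy : y ∈ B <;> tauto
  have hsubl : ∀ i, (C i \ A) ×ˢ D i ⊆ C i ×ˢ D i :=
    fun i => Set.prod_mono Set.diff_subset subset_rfl
  have hsubr : ∀ i, (C i ∩ A) ×ˢ (D i \ B) ⊆ C i ×ˢ D i :=
    fun i => Set.prod_mono Set.inter_subset_left Set.diff_subset
  refine ⟨fun k => ?_, fun k => ?_, ?_, ?_⟩
  · cases k with
    | inl i => exact hRX.diff_mem (h.1 i) hA
    | inr i => exact hRX.inter_mem (h.1 i) hA
  · cases k with
    | inl i => exact h.2.1 i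
    | inr i => exact hRY.diff_mem (h.2.1 i) hB
  · intro k k' hkk'
    rcases k with i | i <;> rcases k' with i' | i'
    · exact (h.2.2.1 (fun hh => hkk' (by rw [hh]))).mono (hsubl i) (hsubl i')
    · rcases eq_or_ne i i' with rfl | hii
      · rw [Set.disjoint_left]
        rintro ⟨x, y⟩ ⟨hx1, -⟩ ⟨hx2, -⟩
        exact hx1.2 hx2.2
      · exact (h.2.2.1 hii).mono (hsubl i) (hsubr i')
    · rcases eq_or_ne i i' with rfl | hii
      · rw [Set.disjoint_left]
        rintro ⟨x, y⟩ ⟨hx1, -⟩ ⟨hx2, -⟩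
        exact hx2.2 hx1.2
      · exact (h.2.2.1 hii).mono (hsubr i) (hsubl i')
    · exact (h.2.2.1 (fun hh => hkk' (by rw [hh]))).mono (hsubr i) (hsubr i')
  · rw [h.2.2.2, Set.iUnion_diff, Set.iUnion_sum]
    simp only [Sum.elim_inl, Sum.elim_inr]
    rw [← Set.iUnion_union_distrib]
    exact Set.iUnion_congr hpiece

theorem HasRep.diff {S T : Set (X × Y)}
    (hRX : IsCoveringRing RX) (hRY : IsCoveringRing RY)
    (h1 : HasRep RX RY S) (h2 : HasRep RX RY T) : HasRep RX RY (S \ T) := by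
  classical
  obtain ⟨n, C', D', h2⟩ := h2
  have key : ∀ t : Finset (Fin n), HasRep RX RY (S \ ⋃ j ∈ t, C' j ×ˢ D' j) := by
    intro t
    induction t using Finset.induction_on with
    | empty => simpa using h1
    | @insert a s ha ih =>
        have heq : S \ ⋃ j ∈ insert a s, C' j ×ˢ D' j
            = (S \ ⋃ j ∈ s, C' j ×ˢ D' j) \ C' a ×ˢ D' a := by
          rw [Finset.set_biUnion_insert, Set.diff_diff, Set.union_comm]
        rw [heq]
        obtain ⟨m, C'', D'', hrep⟩ := ih
        exact (hrep.diff_rect hRX hRY (h2.1 a) (h2.2.1 a)).hasRep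
  have := key Finset.univ
  simpa [h2.2.2.2] using this

theorem HasRep.inter' {S T : Set (X × Y)}
    (hRX : IsCoveringRing RX) (hRY : IsCoveringRing RY)
    (h1 : HasRep RX RY S) (h2 : HasRep RX RY T) : HasRep RX RY (S ∩ T) := by
  obtain ⟨n, C, D, h1⟩ := h1
  obtain ⟨m, C', D', h2⟩ := h2
  exact (h1.inter hRX hRY h2).hasRep

theorem HasRep.union' {S T : Set (X × Y)}
    (hRX : IsCoveringRing RX) (hRY : IsCoveringRing RY)
    (h1 : HasRep RX RY S) (h2 : HasRep RX RY T) : HasRep RX RY (S ∪ T) := by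
  obtain ⟨n, C, D, hS⟩ := h1
  obtain ⟨m, C', D', hTS⟩ := (HasRep.diff hRX hRY h2 ⟨n, C, D, hS⟩ :)
  have : S ∪ T = S ∪ (T \ S) := by rw [Set.union_diff_self]
  rw [this]
  exact (hS.union_disjoint hTS disjoint_sdiff_right).hasRep

theorem ringGen_hasRep {S : Set (X × Y)}
    (hRX : IsCoveringRing RX) (hRY : IsCoveringRing RY)
    (h : RingGen (rectangles RX RY) S) : HasRep RX RY S := by
  induction h with
  | @basic A hA =>
      obtain ⟨A', hA', B', hB', rfl⟩ := hA
      exact hasRep_rect hA' hB'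
  | union _ _ ih1 ih2 => exact ih1.union' hRX hRY ih2
  | inter _ _ ih1 ih2 => exact ih1.inter' hRX hRY ih2
  | diff _ _ ih1 ih2 => exact HasRep.diff hRX hRY ih1 ih2

theorem empty_mem_ringGen [Nonempty X] [Nonempty Y]
    (hRX : IsCoveringRing RX) (hRY : IsCoveringRing RY) :
    RingGen (rectangles RX RY) (∅ : Set (X × Y)) := by
  obtain ⟨A, hA, -⟩ := hRX.covers (Classical.arbitrary X)
  obtain ⟨B, hB, -⟩ := hRY.covers (Classical.arbitrary Y)
  have hr : RingGen (rectangles RX RY) (A ×ˢ B) := RingGen.basic ⟨A, hA, B, hB, rfl⟩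
  have := RingGen.diff hr hr
  rwa [Set.diff_self] at this

theorem partialUnion_mem_ringGen [Nonempty X] [Nonempty Y]
    (hRX : IsCoveringRing RX) (hRY : IsCoveringRing RY) {ι : Type*}
    {C : ι → Set X} {D : ι → Set Y} (hC : ∀ i, C i ∈ RX) (hD : ∀ i, D i ∈ RY)
    (t : Finset ι) : RingGen (rectangles RX RY) (⋃ j ∈ t, C j ×ˢ D j) := by
  classical
  induction t using Finset.induction_on with
  | empty => simpa using empty_mem_ringGen hRX hRY
  | @insert a s ha ih =>
      rw [Finset.set_biUnion_insert]
      exact RingGen.union (RingGen.basic ⟨C a, hC a, D a, hD a, rfl⟩) ih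

theorem RepOf.mem_ringGen [Nonempty X] [Nonempty Y]
    (hRX : IsCoveringRing RX) (hRY : IsCoveringRing RY) {S : Set (X × Y)} {ι : Type}
    [Fintype ι] {C : ι → Set X} {D : ι → Set Y} (h : RepOf RX RY S C D) :
    RingGen (rectangles RX RY) S := by
  have := partialUnion_mem_ringGen hRX hRY h.1 h.2.1 Finset.univ
  have heq : (⋃ j ∈ (Finset.univ : Finset ι), C j ×ˢ D j) = ⋃ j, C j ×ˢ D j := by simp
  rw [heq] at this
  rwa [h.2.2.2]

end Reps

section ProdVal

variable [NontriviallyNormedField K]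
variable {RX : Set (Set X)} {RY : Set (Set Y)} {μ : Set X → K} {ν : Set Y → K}

theorem aux_disjoint_D {ι : Type*} {C : ι → Set X} {D : ι → Set Y}
    (hdisj : Pairwise fun i j => Disjoint (C i ×ˢ D i) (C j ×ˢ D j))
    {x : X} {i j : ι} (hi : x ∈ C i) (hj : x ∈ C j) (hij : i ≠ j) :
    Disjoint (D i) (D j) := by
  rw [Set.disjoint_left]
  intro y hyi hyj
  exact Set.disjoint_left.mp (hdisj hij) (⟨hi, hyi⟩ : (x, y) ∈ C i ×ˢ D i) ⟨hj, hyj⟩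

/-- Step 1: the value of a representation computed through the atoms of a refining family. -/
theorem aux_step1 (hRX : IsCoveringRing RX) (hRY : IsCoveringRing RY)
    [Nonempty X] [Nonempty Y]
    (hμadd : ∀ ⦃A⦄, A ∈ RX → ∀ ⦃B⦄, B ∈ RX → Disjoint A B → μ (A ∪ B) = μ A + μ B)
    (hνadd : ∀ ⦃A⦄, A ∈ RY → ∀ ⦃B⦄, B ∈ RY → Disjoint A B → ν (A ∪ B) = ν A + ν B)
    {ι κ : Type} [Fintype ι] [Fintype κ] [DecidableEq κ]
    (C : ι → Set X) (D : ι → Set Y) (G : κ → Set X) (e : ι → κ)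
    (hCe : ∀ i, C i = G (e i)) (hG : ∀ j, G j ∈ RX) (hD : ∀ i, D i ∈ RY)
    (hdisj : Pairwise fun i j => Disjoint (C i ×ˢ D i) (C j ×ˢ D j)) :
    ∑ i, μ (C i) * ν (D i)
      = ∑ s : Finset κ, μ (ratom G s)
          * ν (⋃ i ∈ Finset.univ.filter (fun i => e i ∈ s), D i) := by
  classical
  have h0X : ∅ ∈ RX := hRX.empty_mem
  have h0Y : ∅ ∈ RY := hRY.empty_mem
  have hμC : ∀ i, μ (C i)
      = ∑ s ∈ Finset.univ.filter (fun s : Finset κ => e i ∈ s), μ (ratom G s) := by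
    intro i
    rw [hCe i]
    exact measure_eq_sum_ratoms hRX h0X hμadd G hG (e i)
  calc
    ∑ i, μ (C i) * ν (D i)
        = ∑ i, ∑ s ∈ Finset.univ.filter (fun s : Finset κ => e i ∈ s),
            μ (ratom G s) * ν (D i) := by
          refine Finset.sum_congr rfl fun i _ => ?_
          rw [hμC i, Finset.sum_mul]
    _ = ∑ i : ι, ∑ s : Finset κ,
          if e i ∈ s then μ (ratom G s) * ν (D i) else 0 := by
          refine Finset.sum_congr rfl fun i _ => ?_
          rw [Finset.sum_filter]
    _ = ∑ s : Finset κ, ∑ i : ι,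
          if e i ∈ s then μ (ratom G s) * ν (D i) else 0 := Finset.sum_comm
    _ = ∑ s : Finset κ, ∑ i ∈ Finset.univ.filter (fun i => e i ∈ s),
            μ (ratom G s) * ν (D i) := by
          refine Finset.sum_congr rfl fun s _ => ?_
          rw [Finset.sum_filter]
    _ = ∑ s : Finset κ, μ (ratom G s)
          * ν (⋃ i ∈ Finset.univ.filter (fun i => e i ∈ s), D i) := by
          refine Finset.sum_congr rfl fun s _ => ?_
          rcases (ratom G s).eq_empty_or_nonempty with hemp | ⟨x, hx⟩
          · rw [hemp, aux_measure_empty hμadd h0X]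
            simp
          · rw [← Finset.mul_sum]
            congr 1
            refine (aux_additive_biUnion hRY h0Y hνadd D _
              (fun i _ => hD i) fun i hi j hj hij => ?_).symm
            have hxi : x ∈ C i := by
              rw [hCe i]
              exact (hx (e i)).mpr (Finset.mem_filter.mp hi).2
            have hxj : x ∈ C j := by
              rw [hCe j]
              exact (hx (e j)).mpr (Finset.mem_filter.mp hj).2
            exact aux_disjoint_D hdisj hxi hxj hij

/-- Representation independence of the product value. -/
theorem aux_repOf_val_eq (hRX : IsCoveringRing RX) (hRY : IsCoveringRing RY)
    [Nonempty X] [Nonempty Y]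
    (hμadd : ∀ ⦃A⦄, A ∈ RX → ∀ ⦃B⦄, B ∈ RX → Disjoint A B → μ (A ∪ B) = μ A + μ B)
    (hνadd : ∀ ⦃A⦄, A ∈ RY → ∀ ⦃B⦄, B ∈ RY → Disjoint A B → ν (A ∪ B) = ν A + ν B)
    {S : Set (X × Y)} {ι κ : Type} [Fintype ι] [Fintype κ]
    {C : ι → Set X} {D : ι → Set Y} {C' : κ → Set X} {D' : κ → Set Y}
    (h1 : RepOf RX RY S C D) (h2 : RepOf RX RY S C' D') :
    ∑ i, μ (C i) * ν (D i) = ∑ j, μ (C' j) * ν (D' j) := by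
  classical
  set G : ι ⊕ κ → Set X := Sum.elim C C' with hG
  have hGmem : ∀ k, G k ∈ RX := by
    intro k
    cases k with
    | inl i => exact h1.1 i
    | inr j => exact h2.1 j
  rw [aux_step1 hRX hRY hμadd hνadd C D G Sum.inl (fun i => rfl) hGmem h1.2.1 h1.2.2.1,
    aux_step1 hRX hRY hμadd hνadd C' D' G Sum.inr (fun j => rfl) hGmem h2.2.1 h2.2.2.1]
  refine Finset.sum_congr rfl fun s _ => ?_
  rcases (ratom G s).eq_empty_or_nonempty with hemp | ⟨x, hx⟩
  · rw [hemp, aux_measure_empty hμadd hRX.empty_mem, zero_mul, zero_mul]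
  · congr 2
    have hsec1 : (⋃ i ∈ Finset.univ.filter (fun i : ι => Sum.inl i ∈ s), D i)
        = {y | (x, y) ∈ S} := by
      ext y
      simp only [Set.mem_iUnion, Finset.mem_filter, Finset.mem_univ, true_and,
        Set.mem_setOf_eq, h1.2.2.2, Set.mem_prod]
      constructor
      · rintro ⟨i, his, hyi⟩
        exact ⟨i, (hx (Sum.inl i)).mpr his, hyi⟩
      · rintro ⟨i, hxi, hyi⟩
        exact ⟨i, (hx (Sum.inl i)).mp hxi, hyi⟩
    have hsec2 : (⋃ j ∈ Finset.univ.filter (fun j : κ => Sum.inr j ∈ s), D' j)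
        = {y | (x, y) ∈ S} := by
      ext y
      simp only [Set.mem_iUnion, Finset.mem_filter, Finset.mem_univ, true_and,
        Set.mem_setOf_eq, h2.2.2.2, Set.mem_prod]
      constructor
      · rintro ⟨j, hjs, hyj⟩
        exact ⟨j, (hx (Sum.inr j)).mpr hjs, hyj⟩
      · rintro ⟨j, hxj, hyj⟩
        exact ⟨j, (hx (Sum.inr j)).mp hxj, hyj⟩
    rw [hsec1, hsec2]

/-- The product measure, defined through a choice of a disjoint rectangle
representation (and `0` junk value off the generated ring). -/
noncomputable def lamF (RX' : Set (Set X)) (RY' : Set (Set Y)) (μ' : Set X → K)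
    (ν' : Set Y → K) (S : Set (X × Y)) : K :=
  @dite _ (HasRep RX' RY' S) (Classical.dec _)
    (fun h => ∑ i, μ' (h.choose_spec.choose i) * ν' (h.choose_spec.choose_spec.choose i))
    (fun _ => 0)

theorem lamF_eq (hRX : IsCoveringRing RX) (hRY : IsCoveringRing RY)
    [Nonempty X] [Nonempty Y]
    (hμadd : ∀ ⦃A⦄, A ∈ RX → ∀ ⦃B⦄, B ∈ RX → Disjoint A B → μ (A ∪ B) = μ A + μ B)
    (hνadd : ∀ ⦃A⦄, A ∈ RY → ∀ ⦃B⦄, B ∈ RY → Disjoint A B → ν (A ∪ B) = ν A + ν B)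
    {S : Set (X × Y)} {ι : Type} [Fintype ι] {C : ι → Set X} {D : ι → Set Y}
    (h : RepOf RX RY S C D) :
    lamF RX RY μ ν S = ∑ i, μ (C i) * ν (D i) := by
  have hh : HasRep RX RY S := h.hasRep
  rw [lamF, dif_pos hh]
  exact aux_repOf_val_eq hRX hRY hμadd hνadd hh.choose_spec.choose_spec.choose_spec h

end ProdVal

section Conseq

variable [NontriviallyNormedField K]
variable {RX : Set (Set X)} {RY : Set (Set Y)} {μ : Set X → K} {ν : Set Y → K}

theorem le_mnorm' {R : Set (Set X)} (μ : Set X → K) {B A : Set X}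
    (hB : B ∈ R) (hBA : B ⊆ A) : (‖μ B‖₊ : ℝ≥0∞) ≤ mnorm R μ A := by
  rw [mnorm]
  exact le_iSup_of_le B (le_iSup_of_le ⟨hB, hBA⟩ le_rfl)

theorem aux_exists_real_bound {R : Set (Set X)} {μ : Set X → K} {P : Set X}
    (h : mnorm R μ P < ⊤) : ∃ M : ℝ, 0 ≤ M ∧ ∀ B ∈ R, B ⊆ P → ‖μ B‖ ≤ M := by
  refine ⟨(mnorm R μ P).toReal, ENNReal.toReal_nonneg, fun B hB hBP => ?_⟩
  have hle : (‖μ B‖₊ : ℝ≥0∞) ≤ mnorm R μ P := le_mnorm' μ hB hBP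
  have := ENNReal.toReal_mono h.ne hle
  simpa using this

theorem lam_rect (hRX : IsCoveringRing RX) (hRY : IsCoveringRing RY)
    [Nonempty X] [Nonempty Y]
    (hμadd : ∀ ⦃A⦄, A ∈ RX → ∀ ⦃B⦄, B ∈ RX → Disjoint A B → μ (A ∪ B) = μ A + μ B)
    (hνadd : ∀ ⦃A⦄, A ∈ RY → ∀ ⦃B⦄, B ∈ RY → Disjoint A B → ν (A ∪ B) = ν A + ν B)
    {A : Set X} {B : Set Y} (hA : A ∈ RX) (hB : B ∈ RY) :
    lamF RX RY μ ν (A ×ˢ B) = μ A * ν B := by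
  have hrep : RepOf RX RY (A ×ˢ B) (fun _ : Fin 1 => A) (fun _ : Fin 1 => B) :=
    ⟨fun _ => hA, fun _ => hB, Subsingleton.pairwise, by simp [Set.iUnion_const]⟩
  rw [lamF_eq hRX hRY hμadd hνadd hrep]
  simp

theorem lam_add (hRX : IsCoveringRing RX) (hRY : IsCoveringRing RY)
    [Nonempty X] [Nonempty Y]
    (hμadd : ∀ ⦃A⦄, A ∈ RX → ∀ ⦃B⦄, B ∈ RX → Disjoint A B → μ (A ∪ B) = μ A + μ B)
    (hνadd : ∀ ⦃A⦄, A ∈ RY → ∀ ⦃B⦄, B ∈ RY → Disjoint A B → ν (A ∪ B) = ν A + ν B)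
    {S T : Set (X × Y)} (hS : RingGen (rectangles RX RY) S)
    (hT : RingGen (rectangles RX RY) T) (hST : Disjoint S T) :
    lamF RX RY μ ν (S ∪ T) = lamF RX RY μ ν S + lamF RX RY μ ν T := by
  obtain ⟨n, C, D, h1⟩ := ringGen_hasRep hRX hRY hS
  obtain ⟨m, C', D', h2⟩ := ringGen_hasRep hRX hRY hT
  rw [lamF_eq hRX hRY hμadd hνadd (h1.union_disjoint h2 hST),
    lamF_eq hRX hRY hμadd hνadd h1, lamF_eq hRX hRY hμadd hνadd h2,
    Fintype.sum_sum_type]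
  simp

theorem RepOf.inter_box (hRX : IsCoveringRing RX) (hRY : IsCoveringRing RY)
    {T : Set (X × Y)} {ι : Type} [Fintype ι] {C : ι → Set X} {D : ι → Set Y}
    (h : RepOf RX RY T C D) {P : Set X} {Q : Set Y} (hP : P ∈ RX) (hQ : Q ∈ RY)
    (hT : T ⊆ P ×ˢ Q) :
    RepOf RX RY T (fun i => C i ∩ P) (fun i => D i ∩ Q) := by
  refine ⟨fun i => hRX.inter_mem (h.1 i) hP, fun i => hRY.inter_mem (h.2.1 i) hQ, ?_, ?_⟩
  · intro i j hij
    exact (h.2.2.1 hij).mono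
      (Set.prod_mono Set.inter_subset_left Set.inter_subset_left)
      (Set.prod_mono Set.inter_subset_left Set.inter_subset_left)
  · apply Set.Subset.antisymm
    · intro z hz
      have hzPQ := hT hz
      rw [h.2.2.2] at hz
      obtain ⟨i, hi⟩ := Set.mem_iUnion.mp hz
      exact Set.mem_iUnion.mpr ⟨i, ⟨⟨hi.1, hzPQ.1⟩, hi.2, hzPQ.2⟩⟩
    · refine Set.iUnion_subset fun i => ?_
      refine Set.Subset.trans (Set.prod_mono Set.inter_subset_left Set.inter_subset_left) ?_
      exact h.subset_left i

theorem lam_norm_le (hRX : IsCoveringRing RX) (hRY : IsCoveringRing RY)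
    [Nonempty X] [Nonempty Y] [IsUltrametricDist K]
    (hμadd : ∀ ⦃A⦄, A ∈ RX → ∀ ⦃B⦄, B ∈ RX → Disjoint A B → μ (A ∪ B) = μ A + μ B)
    (hνadd : ∀ ⦃A⦄, A ∈ RY → ∀ ⦃B⦄, B ∈ RY → Disjoint A B → ν (A ∪ B) = ν A + ν B)
    {T : Set (X × Y)} {P : Set X} {Q : Set Y} (hrepT : HasRep RX RY T)
    (hsub : T ⊆ P ×ˢ Q) (hP : P ∈ RX) (hQ : Q ∈ RY) {M N : ℝ}
    (hM0 : 0 ≤ M) (hN0 : 0 ≤ N)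
    (hM : ∀ B ∈ RX, B ⊆ P → ‖μ B‖ ≤ M) (hN : ∀ B ∈ RY, B ⊆ Q → ‖ν B‖ ≤ N) :
    ‖lamF RX RY μ ν T‖ ≤ M * N := by
  obtain ⟨n, C, D, hrep0⟩ := hrepT
  have hrep := hrep0.inter_box hRX hRY hP hQ hsub
  rw [lamF_eq hRX hRY hμadd hνadd hrep]
  refine aux_unorm_sum_le _ _ (mul_nonneg hM0 hN0) fun i _ => ?_
  rw [norm_mul]
  exact mul_le_mul (hM _ (hRX.inter_mem (hrep0.1 i) hP) Set.inter_subset_right)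
    (hN _ (hRY.inter_mem (hrep0.2.1 i) hQ) Set.inter_subset_right)
    (norm_nonneg _) hM0

theorem RepOf.subset_box {T : Set (X × Y)} {ι : Type} [Fintype ι]
    {C : ι → Set X} {D : ι → Set Y} (h : RepOf RX RY T C D) :
    T ⊆ (⋃ i, C i) ×ˢ (⋃ i, D i) := by
  rw [h.2.2.2]
  refine Set.iUnion_subset fun i => ?_
  exact Set.prod_mono (Set.subset_iUnion C i) (Set.subset_iUnion D i)

theorem lam_mnorm_lt_top (hRX : IsCoveringRing RX) (hRY : IsCoveringRing RY)
    [Nonempty X] [Nonempty Y] [IsUltrametricDist K]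
    (hμ : IsMeasure RX μ) (hν : IsMeasure RY ν)
    {S : Set (X × Y)} (hs : RingGen (rectangles RX RY) S) :
    mnorm {S | RingGen (rectangles RX RY) S} (lamF RX RY μ ν) S < ⊤ := by
  obtain ⟨n, C, D, hrep⟩ := ringGen_hasRep hRX hRY hs
  have hP : (⋃ i, C i) ∈ RX := aux_iUnion_mem hRX hRX.empty_mem C hrep.1
  have hQ : (⋃ i, D i) ∈ RY := aux_iUnion_mem hRY hRY.empty_mem D hrep.2.1
  obtain ⟨M, hM0, hM⟩ := aux_exists_real_bound (hμ.bounded hP)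
  obtain ⟨N, hN0, hN⟩ := aux_exists_real_bound (hν.bounded hQ)
  have hbound : mnorm {S | RingGen (rectangles RX RY) S} (lamF RX RY μ ν) S
      ≤ ENNReal.ofReal (M * N) := by
    rw [mnorm]
    refine iSup_le fun T => iSup_le fun hT => ?_
    rw [show (‖lamF RX RY μ ν T‖₊ : ℝ≥0∞) = ENNReal.ofReal ‖lamF RX RY μ ν T‖ from
      (ofReal_norm _).symm]
    refine ENNReal.ofReal_le_ofReal ?_
    exact lam_norm_le hRX hRY hμ.additive hν.additive
      (ringGen_hasRep hRX hRY hT.1) (hT.2.trans hrep.subset_box) hP hQ hM0 hN0 hM hN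
  exact lt_of_le_of_lt hbound ENNReal.ofReal_lt_top

theorem lam_mnorm_rect (hRX : IsCoveringRing RX) (hRY : IsCoveringRing RY)
    [Nonempty X] [Nonempty Y] [IsUltrametricDist K]
    (hμ : IsMeasure RX μ) (hν : IsMeasure RY ν)
    {A : Set X} {B : Set Y} (hA : A ∈ RX) (hB : B ∈ RY) :
    mnorm {S | RingGen (rectangles RX RY) S} (lamF RX RY μ ν) (A ×ˢ B)
      = mnorm RX μ A * mnorm RY ν B := by
  apply le_antisymm
  · rw [mnorm]
    refine iSup_le fun T => iSup_le fun hT => ?_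
    obtain ⟨n, C, D, hrep0⟩ := ringGen_hasRep hRX hRY hT.1
    have hrep := hrep0.inter_box hRX hRY hA hB hT.2
    rw [lamF_eq hRX hRY hμ.additive hν.additive hrep]
    refine aux_unnnorm_sum_le _ _ fun i _ => ?_
    rw [nnnorm_mul, ENNReal.coe_mul]
    exact mul_le_mul'
      (le_mnorm' μ (hRX.inter_mem (hrep0.1 i) hA) Set.inter_subset_right)
      (le_mnorm' ν (hRY.inter_mem (hrep0.2.1 i) hB) Set.inter_subset_right)
  · rw [mnorm, mnorm, ENNReal.iSup_mul]
    refine iSup_le fun C => ?_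
    rw [ENNReal.iSup_mul]
    refine iSup_le fun hC => ?_
    rw [ENNReal.mul_iSup]
    refine iSup_le fun D => ?_
    rw [ENNReal.mul_iSup]
    refine iSup_le fun hD => ?_
    rw [← ENNReal.coe_mul, ← nnnorm_mul,
      ← lam_rect hRX hRY hμ.additive hν.additive hC.1 hD.1]
    exact le_mnorm' _ (RingGen.basic ⟨C, hC.1, D, hD.1, rfl⟩)
      (Set.prod_mono hC.2 hD.2)

theorem lam_unique (hRX : IsCoveringRing RX) (hRY : IsCoveringRing RY)
    [Nonempty X] [Nonempty Y]
    (hμ : IsMeasure RX μ) (hν : IsMeasure RY ν) (lam' : Set (X × Y) → K)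
    (hrect : ∀ A ∈ RX, ∀ B ∈ RY, lam' (A ×ˢ B) = μ A * ν B)
    (hadd : ∀ ⦃S⦄, RingGen (rectangles RX RY) S → ∀ ⦃S'⦄,
      RingGen (rectangles RX RY) S' → Disjoint S S' →
      lam' (S ∪ S') = lam' S + lam' S')
    {S : Set (X × Y)} (hs : RingGen (rectangles RX RY) S) :
    lam' S = lamF RX RY μ ν S := by
  classical
  obtain ⟨n, C, D, hrep⟩ := ringGen_hasRep hRX hRY hs
  have h0 : lam' ∅ = 0 := by
    have := hadd (empty_mem_ringGen hRX hRY) (empty_mem_ringGen hRX hRY) (by simp)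
    rw [Set.union_self] at this
    exact left_eq_add.mp this
  have key : ∀ t : Finset (Fin n),
      lam' (⋃ j ∈ t, C j ×ˢ D j) = ∑ j ∈ t, μ (C j) * ν (D j) := by
    intro t
    induction t using Finset.induction_on with
    | empty => simpa using h0
    | @insert a s ha ih =>
        rw [Finset.set_biUnion_insert, Finset.sum_insert ha,
          hadd (RingGen.basic ⟨C a, hrep.1 a, D a, hrep.2.1 a, rfl⟩)
            (partialUnion_mem_ringGen hRX hRY hrep.1 hrep.2.1 s)
            (by
              simp only [Set.disjoint_iUnion_right]
              intro j hj
              exact hrep.2.2.1 fun h => ha (by rw [h]; exact hj)),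
          ih, hrect _ (hrep.1 a) _ (hrep.2.1 a)]
  have hkey := key Finset.univ
  have hU : (⋃ j ∈ (Finset.univ : Finset (Fin n)), C j ×ˢ D j) = S := by
    rw [hrep.2.2.2]
    simp
  rw [hU] at hkey
  rw [hkey, lamF_eq hRX hRY hμ.additive hν.additive hrep]

theorem ringGen_coveringRing (hRX : IsCoveringRing RX) (hRY : IsCoveringRing RY) :
    IsCoveringRing {S | RingGen (rectangles RX RY) S} := by
  refine ⟨fun A B hA hB => RingGen.union hA hB, fun A B hA hB => RingGen.inter hA hB,
    fun A B hA hB => RingGen.diff hA hB, ?_⟩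
  rintro ⟨x, y⟩
  obtain ⟨A, hA, hxA⟩ := hRX.covers x
  obtain ⟨B, hB, hyB⟩ := hRY.covers y
  exact ⟨A ×ˢ B, RingGen.basic ⟨A, hA, B, hB, rfl⟩, hxA, hyB⟩

theorem sec_mem_ringGen [Nonempty Y] (hRY : IsCoveringRing RY) {S : Set (X × Y)}
    (hs : RingGen (rectangles RX RY) S) (x : X) : {y | (x, y) ∈ S} ∈ RY := by
  induction hs with
  | @basic A hA =>
      obtain ⟨A', hA', B', hB', rfl⟩ := hA
      by_cases hx : x ∈ A'
      · have : {y | (x, y) ∈ A' ×ˢ B'} = B' := by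
          ext y
          simp [Set.mem_prod, hx]
        rw [this]
        exact hB'
      · have : {y | (x, y) ∈ A' ×ˢ B'} = ∅ := by
          ext y
          simp [Set.mem_prod, hx]
        rw [this]
        exact hRY.empty_mem
  | union _ _ ih1 ih2 => exact hRY.union_mem ih1 ih2
  | inter _ _ ih1 ih2 => exact hRY.inter_mem ih1 ih2
  | diff _ _ ih1 ih2 => exact hRY.diff_mem ih1 ih2

end Conseq

section Shrink

variable [NontriviallyNormedField K]
variable {RX : Set (Set X)} {RY : Set (Set Y)} {μ : Set X → K} {ν : Set Y → K}

/-- The set of first coordinates where the section of `A` still contains a set of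
`ν`-norm `> δ`. -/
def Ebad (RY : Set (Set Y)) (ν : Set Y → K) (δ : ℝ) (A : Set (X × Y)) : Set X :=
  {x | ∃ B ∈ RY, B ⊆ {y | (x, y) ∈ A} ∧ δ < ‖ν B‖}

theorem Ebad_mono {δ : ℝ} {A A' : Set (X × Y)} (h : A ⊆ A') :
    Ebad RY ν δ A ⊆ Ebad RY ν δ A' := by
  rintro x ⟨B, hB, hsub, hbig⟩
  exact ⟨B, hB, fun y hy => h (hsub hy), hbig⟩

theorem sec_eq_of_rep {ι : Type} [Fintype ι] {C : ι → Set X} {D : ι → Set Y}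
    {A : Set (X × Y)} (hrep : RepOf RX RY A C D) (x : X)
    [DecidablePred fun i => x ∈ C i] :
    {y | (x, y) ∈ A} = ⋃ i ∈ Finset.univ.filter (fun i => x ∈ C i), D i := by
  ext y
  simp only [Set.mem_setOf_eq, hrep.2.2.2, Set.mem_iUnion, Set.mem_prod,
    Finset.mem_filter, Finset.mem_univ, true_and]
  constructor
  · rintro ⟨i, hxi, hyi⟩
    exact ⟨i, hxi, hyi⟩
  · rintro ⟨i, hxi, hyi⟩
    exact ⟨i, hxi, hyi⟩

theorem Ebad_mem_ring (hRX : IsCoveringRing RX) (hRY : IsCoveringRing RY)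
    [Nonempty X] [Nonempty Y]
    (hν0 : ν ∅ = 0) {δ : ℝ} (hδ : 0 < δ) {A : Set (X × Y)} {ι : Type} [Fintype ι]
    {C : ι → Set X} {D : ι → Set Y} (hrep : RepOf RX RY A C D) :
    Ebad RY ν δ A ∈ RX := by
  classical
  have h0X : ∅ ∈ RX := hRX.empty_mem
  set bigF : Finset (Finset ι) := Finset.univ.filter
    (fun s : Finset ι => s.Nonempty ∧ ∃ B ∈ RY, B ⊆ (⋃ i ∈ s, D i) ∧ δ < ‖ν B‖)
    with hbigF
  have key : Ebad RY ν δ A = ⋃ s ∈ bigF, ratom C s := by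
    ext x
    simp only [Set.mem_iUnion, hbigF, Finset.mem_filter, Finset.mem_univ, true_and]
    constructor
    · rintro ⟨B, hB, hsub, hbig⟩
      set sx := Finset.univ.filter (fun i => x ∈ C i) with hsx
      have hxs : x ∈ ratom C sx := mem_ratom_self C x
      have hsec : {y | (x, y) ∈ A} = ⋃ i ∈ sx, D i := sec_eq_of_rep hrep x
      rw [hsec] at hsub
      refine ⟨sx, ⟨⟨?_, B, hB, hsub, hbig⟩, hxs⟩⟩
      rcases sx.eq_empty_or_nonempty with he | hne
      · exfalso
        rw [he] at hsub
        simp only [Finset.notMem_empty, Set.iUnion_of_empty, Set.iUnion_empty] at hsub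
        have hBe : B = ∅ := Set.subset_empty_iff.mp hsub
        rw [hBe, hν0, norm_zero] at hbig
        linarith
      · exact hne
    · rintro ⟨s, ⟨⟨hne, B, hB, hsub, hbig⟩, hxs⟩⟩
      have hxs' : ∀ i, x ∈ C i ↔ i ∈ s := hxs
      have hfil : Finset.univ.filter (fun i => x ∈ C i) = s :=
        Finset.ext fun i => by simp [hxs' i]
      have hsec : {y | (x, y) ∈ A} = ⋃ i ∈ s, D i := by
        rw [sec_eq_of_rep hrep x, hfil]
      exact ⟨B, hB, by rw [hsec]; exact hsub, hbig⟩
  rw [key]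
  exact aux_biUnion_mem hRX h0X _ bigF fun s hs =>
    ratom_mem hRX h0X C hrep.1 (Finset.mem_filter.mp hs).2.1

theorem lam_shrink_cont [IsUltrametricDist K]
    (hRX : IsCoveringRing RX) (hRY : IsCoveringRing RY)
    (hμ : IsMeasure RX μ) (hν : IsMeasure RY ν) :
    ∀ S : Set (Set (X × Y)), IsShrinking {S | RingGen (rectangles RX RY) S} S →
      ⋂₀ S = ∅ → TendstoZeroOn S fun A => ‖lamF RX RY μ ν A‖ := by
  classical
  haveI hX : Nonempty X := hμ.nonempty'
  haveI hY : Nonempty Y := hν.nonempty'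
  intro S hS hI ε hε
  have hSne : S.Nonempty := by
    rcases S.eq_empty_or_nonempty with h | h
    · exfalso
      rw [h, sInter_empty] at hI
      exact Set.univ_nonempty.ne_empty hI
    · exact h
  obtain ⟨A0, hA0⟩ := hSne
  have hA0r : RingGen (rectangles RX RY) A0 := hS.1 hA0
  obtain ⟨n0, C0, D0, hrep0⟩ := ringGen_hasRep hRX hRY hA0r
  set P := ⋃ i, C0 i with hP'
  set Q := ⋃ i, D0 i with hQ'
  have hP : P ∈ RX := aux_iUnion_mem hRX hRX.empty_mem C0 hrep0.1
  have hQ : Q ∈ RY := aux_iUnion_mem hRY hRY.empty_mem D0 hrep0.2.1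
  have hA0PQ : A0 ⊆ P ×ˢ Q := hrep0.subset_box
  obtain ⟨M, hM0, hM⟩ := aux_exists_real_bound (hμ.bounded hP)
  obtain ⟨N, hN0, hN⟩ := aux_exists_real_bound (hν.bounded hQ)
  set δ := ε / (M + 1) with hδ'
  have hδ : 0 < δ := div_pos hε (by linarith)
  set δ' := ε / (N + 1) with hδ''
  have hδ'pos : 0 < δ' := div_pos hε (by linarith)
  have hν0 : ν ∅ = 0 := aux_measure_empty hν.additive hRY.empty_mem
  set S0 := {A | A ∈ S ∧ A ⊆ A0} with hS0
  have hdir : ∀ A ∈ S, ∀ B ∈ S, ∃ C ∈ S0, C ⊆ A ∩ B := by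
    intro A hA B hB
    obtain ⟨C1, hC1, hC1sub⟩ := hS.2 hA hB
    obtain ⟨C2, hC2, hC2sub⟩ := hS.2 hC1 hA0
    exact ⟨C2, ⟨hC2, fun x hx => (hC2sub hx).2⟩, fun x hx => hC1sub (hC2sub hx).1⟩
  set EF := {E | ∃ A ∈ S0, E = Ebad RY ν δ A} with hEF
  have hEmem : ∀ A ∈ S0, Ebad RY ν δ A ∈ RX := by
    intro A hA
    obtain ⟨n, C, D, hrep⟩ := ringGen_hasRep hRX hRY (hS.1 hA.1)
    exact Ebad_mem_ring hRX hRY hν0 hδ hrep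
  have hEFshr : IsShrinking RX EF := by
    constructor
    · rintro E ⟨A, hA, rfl⟩
      exact hEmem A hA
    · rintro E1 ⟨A1, hA1, rfl⟩ E2 ⟨A2, hA2, rfl⟩
      obtain ⟨C, hC, hCsub⟩ := hdir A1 hA1.1 A2 hA2.1
      refine ⟨Ebad RY ν δ C, ⟨C, hC, rfl⟩, fun x hx => ?_⟩
      exact ⟨Ebad_mono (fun z hz => (hCsub hz).1) hx,
        Ebad_mono (fun z hz => (hCsub hz).2) hx⟩
  have hEFI : ⋂₀ EF = ∅ := by
    rw [eq_empty_iff_forall_notMem]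
    intro x hx
    set SecF := {T | ∃ A ∈ S0, T = {y | (x, y) ∈ A}} with hSecF
    have hSecshr : IsShrinking RY SecF := by
      constructor
      · rintro T ⟨A, hA, rfl⟩
        exact sec_mem_ringGen hRY (hS.1 hA.1) x
      · rintro T1 ⟨A1, hA1, rfl⟩ T2 ⟨A2, hA2, rfl⟩
        obtain ⟨C, hC, hCsub⟩ := hdir A1 hA1.1 A2 hA2.1
        exact ⟨{y | (x, y) ∈ C}, ⟨C, hC, rfl⟩, fun y hy =>
          ⟨(hCsub hy).1, (hCsub hy).2⟩⟩
    have hSecI : ⋂₀ SecF = ∅ := by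
      rw [eq_empty_iff_forall_notMem]
      intro y hy
      have hxyS : (x, y) ∈ ⋂₀ S := by
        intro A hA
        obtain ⟨C, hC, hCsub⟩ := hdir A hA A hA
        have hyC : (x, y) ∈ C := Set.mem_sInter.mp hy {y' | (x, y') ∈ C} ⟨C, hC, rfl⟩
        exact (hCsub hyC).1
      rw [hI] at hxyS
      exact hxyS
    obtain ⟨T0, hT0mem, hthr⟩ := aux_mnorm_cont hRY hν hSecshr hSecI hδ
    obtain ⟨Astar, hAstar, rfl⟩ := hT0mem
    have hnotbad : x ∉ Ebad RY ν δ Astar := by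
      rintro ⟨B, hB, hBsub, hBbig⟩
      have := hthr _ ⟨Astar, hAstar, rfl⟩ subset_rfl B hB hBsub
      linarith
    exact hnotbad (Set.mem_sInter.mp hx _ ⟨Astar, hAstar, rfl⟩)
  obtain ⟨E1, hE1mem, hEthr⟩ := aux_mnorm_cont hRX hμ hEFshr hEFI hδ'pos
  obtain ⟨A1, hA1, rfl⟩ := hE1mem
  refine ⟨A1, hA1.1, ?_⟩
  intro A hA hAsub
  have hAS0 : A ∈ S0 := ⟨hA, hAsub.trans hA1.2⟩
  have hEsub : Ebad RY ν δ A ⊆ Ebad RY ν δ A1 := Ebad_mono hAsub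
  have hEbound : ∀ T ∈ RX, T ⊆ Ebad RY ν δ A → ‖μ T‖ ≤ δ' :=
    fun T hT hTsub => hEthr _ ⟨A, hAS0, rfl⟩ hEsub T hT hTsub
  obtain ⟨n, C', D', hrepA0⟩ := ringGen_hasRep hRX hRY (hS.1 hA)
  have hAPQ : A ⊆ P ×ˢ Q := hAS0.2.trans hA0PQ
  have hrepA := hrepA0.inter_box hRX hRY hP hQ hAPQ
  set C : Fin n → Set X := fun i => C' i ∩ P with hC'
  set D : Fin n → Set Y := fun i => D' i ∩ Q with hD'
  rw [abs_norm, lamF_eq hRX hRY hμ.additive hν.additive hrepA,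
    aux_step1 hRX hRY hμ.additive hν.additive C D C id (fun i => rfl)
      hrepA.1 hrepA.2.1 hrepA.2.2.1]
  refine aux_unorm_sum_le _ _ hε.le fun s _ => ?_
  set DU := ⋃ i ∈ Finset.univ.filter (fun i => id i ∈ s), D i with hDU
  have hDUmem : DU ∈ RY := aux_biUnion_mem hRY hRY.empty_mem D _ fun i _ => hrepA.2.1 i
  have hDUQ : DU ⊆ Q := by
    refine Set.iUnion_subset fun i => Set.iUnion_subset fun _ => ?_
    exact Set.inter_subset_right
  have hMδ : M * δ ≤ ε := by
    have hpos : (0 : ℝ) < M + 1 := by linarith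
    rw [hδ', ← mul_div_assoc, div_le_iff₀ hpos]
    nlinarith
  have hδ'N : δ' * N ≤ ε := by
    have hpos : (0 : ℝ) < N + 1 := by linarith
    rw [hδ'', div_mul_eq_mul_div, div_le_iff₀ hpos]
    nlinarith
  rcases s.eq_empty_or_nonempty with rfl | hsne
  · have hfil : Finset.univ.filter (fun i : Fin n => id i ∈ (∅ : Finset (Fin n))) = ∅ := by
      simp
    have hDUe : DU = ∅ := by
      rw [hDU, hfil]
      simp
    rw [hDUe, hν0, mul_zero, norm_zero]
    linarith
  · have hatom : ratom C s ∈ RX := ratom_mem hRX hRX.empty_mem C hrepA.1 hsne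
    have hatomP : ratom C s ⊆ P := by
      obtain ⟨i, hi⟩ := hsne
      intro x hx
      have hx' : ∀ j, x ∈ C j ↔ j ∈ s := hx
      exact ((hx' i).mpr hi).2
    rw [norm_mul]
    by_cases hle : ∃ x ∈ ratom C s, x ∉ Ebad RY ν δ A
    · obtain ⟨x, hxatom, hxgood⟩ := hle
      have hxa : ∀ j, x ∈ C j ↔ j ∈ s := hxatom
      have hfil : Finset.univ.filter (fun i => x ∈ C i)
          = Finset.univ.filter (fun i : Fin n => id i ∈ s) :=
        Finset.ext fun i => by simp [hxa i]
      have hsec : {y | (x, y) ∈ A} = DU := by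
        rw [sec_eq_of_rep hrepA x, hfil, hDU]
      have hνDU : ‖ν DU‖ ≤ δ := by
        by_contra hcon
        push_neg at hcon
        exact hxgood ⟨DU, hDUmem, by rw [hsec], hcon⟩
      have hμat : ‖μ (ratom C s)‖ ≤ M := hM _ hatom hatomP
      calc ‖μ (ratom C s)‖ * ‖ν DU‖ ≤ M * δ :=
            mul_le_mul hμat hνDU (norm_nonneg _) hM0
        _ ≤ ε := hMδ
    · push_neg at hle
      have hμat : ‖μ (ratom C s)‖ ≤ δ' := hEbound _ hatom hle
      have hνDU : ‖ν DU‖ ≤ N := hN _ hDUmem hDUQ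
      calc ‖μ (ratom C s)‖ * ‖ν DU‖ ≤ δ' * N :=
            mul_le_mul hμat hνDU (norm_nonneg _) hδ'pos.le
        _ ≤ ε := hδ'N

end Shrink

end Aux

/-- the product of two `K`-valued measures: there is a unique finitely
additive `λ` on the ring generated by the rectangles with `λ(A × B) = μ(A)ν(B)`; it is
a `K`-valued measure, and `‖A × B‖_λ = ‖A‖_μ · ‖B‖_ν` for all rectangles. -/
theorem product_of_two_measures {X Y K : Type*} [NontriviallyNormedField K]
    [IsUltrametricDist K] [CompleteSpace K]
    (RX : Set (Set X)) (RY : Set (Set Y))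
    (hRX : IsCoveringRing RX) (hRY : IsCoveringRing RY)
    (μ : Set X → K) (ν : Set Y → K)
    (hμ : IsMeasure RX μ) (hν : IsMeasure RY ν) :
    ∃ lam : Set (X × Y) → K,
      (∀ A ∈ RX, ∀ B ∈ RY, lam (A ×ˢ B) = μ A * ν B) ∧
      (∀ ⦃S⦄, RingGen (rectangles RX RY) S → ∀ ⦃S'⦄, RingGen (rectangles RX RY) S' →
        Disjoint S S' → lam (S ∪ S') = lam S + lam S') ∧
      IsMeasure {S | RingGen (rectangles RX RY) S} lam ∧
      (∀ A ∈ RX, ∀ B ∈ RY,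
        mnorm {S | RingGen (rectangles RX RY) S} lam (A ×ˢ B)
          = mnorm RX μ A * mnorm RY ν B) ∧
      (∀ lam' : Set (X × Y) → K,
        (∀ A ∈ RX, ∀ B ∈ RY, lam' (A ×ˢ B) = μ A * ν B) →
        (∀ ⦃S⦄, RingGen (rectangles RX RY) S → ∀ ⦃S'⦄,
          RingGen (rectangles RX RY) S' → Disjoint S S' →
          lam' (S ∪ S') = lam' S + lam' S') →
        ∀ S, RingGen (rectangles RX RY) S → lam' S = lam S) := by
  haveI hX : Nonempty X := hμ.nonempty'
  haveI hY : Nonempty Y := hν.nonempty'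
  refine ⟨lamF RX RY μ ν, ?_, ?_, ?_, ?_, ?_⟩
  · exact fun A hA B hB => lam_rect hRX hRY hμ.additive hν.additive hA hB
  · exact fun S hS S' hS' hd => lam_add hRX hRY hμ.additive hν.additive hS hS' hd
  · exact ⟨fun S hS S' hS' hd => lam_add hRX hRY hμ.additive hν.additive hS hS' hd,
      fun S hS => lam_mnorm_lt_top hRX hRY hμ hν hS,
      lam_shrink_cont hRX hRY hμ hν⟩
  · exact fun A hA B hB => lam_mnorm_rect hRX hRY hμ hν hA hB
  · intro lam' h1 h2 S hS
    exact lam_unique hRX hRY hμ hν lam' h1 h2 hS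

end NonArch
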